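/- Let n = 2^m with m ≥ 2, let H be the extended Hamming code of length n, and let f: F^m → F^m be a linear bijection such that f + Id is also a bijection. Then the set C_{H,f} = ⋃_{β ∈ F^m} R(H_β^0, H_{f(β)}^1) is a perfect distance-3 code in X^n, i.e., it has minimum distance 3 and cardinality 2^{n-1}. -/

import Mathlib

/-- Binary words of length `n`. -/
abbrev BW (n : ℕ) := Fin n → ZMod 2

/-- Ternary words of length `n` over `{0,1,*}`, with `none` playing the role of `*`. -/
abbrev TW (n : ℕ) := Fin n → Option (ZMod 2)

/-- Membership in `X^n`: exactly one coordinate equals `*`. -/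
def isX {n : ℕ} (w : TW n) : Prop := (Finset.univ.filter (fun i => w i = none)).card = 1

/-- Coset `{ x ∈ F^n : Σ x_i = ε, Σ x_i α_i = β }` of the extended Hamming code. -/
def coset {n m : ℕ} (α : Fin n → BW m) (ε : ZMod 2) (β : BW m) : Set (BW n) :=
  {x | (∑ i, x i) = ε ∧ (∑ i, x i • α i) = β}

/-- `r(p)` for an edge `{p, q}`: `*` where `p` and `q` differ, `p` elsewhere. -/
def rword {n : ℕ} (p q : BW n) : TW n := fun i => if p i = q i then some (p i) else none

/-- The code `C_{H,f} = ⋃_{β} R(H^0_β, H^1_{f β})`. -/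
def CHf {n m : ℕ} (α : Fin n → BW m) (f : BW m → BW m) : Set (TW n) :=
  {c | ∃ (β : BW m) (p q : BW n), p ∈ coset α 0 β ∧ q ∈ coset α 1 (f β) ∧
        hammingDist p q = 1 ∧ c = rword p q}

/- ### Auxiliary lemmas -/

lemma z2_add_self : ∀ x : ZMod 2, x + x = 0 := by decide
lemma z2_ne_add_one : ∀ x : ZMod 2, x ≠ x + 1 := by decide
lemma z2_eq_add_one_of_ne : ∀ x y : ZMod 2, x ≠ y → y = x + 1 := by decide
lemma z2_eq_of_add_eq_zero : ∀ x y : ZMod 2, x + y = 0 → x = y := by decide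
lemma z2_add_eq_zero_iff : ∀ x y : ZMod 2, x + y = 0 ↔ x = y := by decide
lemma z2_cases : ∀ x : ZMod 2, x = 0 ∨ x = 1 := by decide
lemma z2_ne_zero : ∀ x : ZMod 2, x ≠ 0 → x = 1 := by decide

lemma bw_add_self {m : ℕ} (x : BW m) : x + x = 0 := funext fun _ => z2_add_self _
lemma bw_eq_of_add_eq_zero {m : ℕ} (x y : BW m) (h : x + y = 0) : x = y :=
  funext fun i => z2_eq_of_add_eq_zero _ _ (congrFun h i)

lemma sum_if_single {n : ℕ} {M : Type*} [AddCommMonoid M] (v : Fin n → M) (j : Fin n) (w : M) :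
    (∑ i, (v i + if i = j then w else 0)) = (∑ i, v i) + w := by
  rw [Finset.sum_add_distrib, Finset.sum_ite_eq' Finset.univ j (fun _ => w)]
  simp

lemma mem_CHf_iff {n m : ℕ} (α : Fin n → BW m) (f : BW m → BW m) (c : TW n) :
    c ∈ CHf α f ↔ ∃ (β : BW m) (j : Fin n) (p : BW n),
      p ∈ coset α 0 β ∧ α j = f β + β ∧
      c = fun i => if i = j then none else some (p i) := by
  constructor
  · rintro ⟨β, p, q, ⟨hp1, hp2⟩, ⟨hq1, hq2⟩, hd, hc⟩
    unfold hammingDist at hd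
    obtain ⟨j, hj⟩ := Finset.card_eq_one.mp hd
    have hiff : ∀ i, p i ≠ q i ↔ i = j := by
      intro i
      have := Finset.ext_iff.mp hj i
      simpa using this
    have hq : ∀ i, q i = if i = j then p i + 1 else p i := by
      intro i
      by_cases h : i = j
      · rw [if_pos h]
        exact z2_eq_add_one_of_ne _ _ ((hiff i).mpr h)
      · rw [if_neg h]
        by_contra hne
        exact h ((hiff i).mp (fun he => hne he.symm))
    refine ⟨β, j, p, ⟨hp1, hp2⟩, ?_, ?_⟩
    · have hs : ∑ i, q i • α i = (∑ i, p i • α i) + α j := by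
        have hterm : ∀ i, q i • α i = p i • α i + (if i = j then α j else 0) := by
          intro i
          rw [hq i]
          by_cases h : i = j
          · subst h; rw [if_pos rfl, if_pos rfl, add_smul, one_smul]
          · rw [if_neg h, if_neg h, add_zero]
        calc ∑ i, q i • α i = ∑ i, (p i • α i + (if i = j then α j else 0)) :=
              Finset.sum_congr rfl (fun i _ => hterm i)
          _ = (∑ i, p i • α i) + α j := sum_if_single _ _ _
      rw [hq2, hp2] at hs
      have h2 : α j = β + (β + α j) := by rw [← add_assoc, bw_add_self, zero_add]
      rw [h2, ← hs]
      exact add_comm _ _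
    · rw [hc]
      funext i
      by_cases h : i = j
      · subst h
        have : p i ≠ q i := (hiff i).mpr rfl
        simp [rword, this]
      · have : p i = q i := by
          by_contra hne; exact h ((hiff i).mp hne)
        simp [rword, this, h]
  · rintro ⟨β, j, p, ⟨hp1, hp2⟩, hj, hc⟩
    refine ⟨β, p, (fun i => if i = j then p i + 1 else p i), ⟨hp1, hp2⟩, ⟨?_, ?_⟩, ?_, ?_⟩
    · have hterm : ∀ i, (if i = j then p i + 1 else p i) = p i + (if i = j then 1 else 0) := by
        intro i; by_cases h : i = j <;> simp [h]
      calc ∑ i, (if i = j then p i + 1 else p i)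
          = ∑ i, (p i + (if i = j then (1:ZMod 2) else 0)) :=
            Finset.sum_congr rfl (fun i _ => hterm i)
        _ = (∑ i, p i) + 1 := sum_if_single _ _ _
        _ = 1 := by rw [hp1, zero_add]
    · have hterm : ∀ i, (if i = j then p i + 1 else p i) • α i
          = p i • α i + (if i = j then α j else 0) := by
        intro i
        by_cases h : i = j
        · subst h; rw [if_pos rfl, if_pos rfl, add_smul, one_smul]
        · rw [if_neg h, if_neg h, add_zero]
      calc ∑ i, (if i = j then p i + 1 else p i) • α i
          = ∑ i, (p i • α i + (if i = j then α j else 0)) :=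
            Finset.sum_congr rfl (fun i _ => hterm i)
        _ = (∑ i, p i • α i) + α j := sum_if_single _ _ _
        _ = f β := by rw [hp2, hj, add_comm (f β) β, ← add_assoc, bw_add_self, zero_add]
    · unfold hammingDist
      have : Finset.filter (fun i => p i ≠ (if i = j then p i + 1 else p i)) Finset.univ = {j} := by
        ext i
        simp only [Finset.mem_filter, Finset.mem_univ, true_and, Finset.mem_singleton]
        by_cases h : i = j
        · simp [h, z2_ne_add_one]
        · simp [h]
      rw [this, Finset.card_singleton]
    · rw [hc]
      funext i
      by_cases h : i = j
      · simp [rword, h, z2_ne_add_one (p i)]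
      · simp [rword, h]

lemma support_card_even {n : ℕ} (x : BW n) (hx : ∑ i, x i = 0) :
    2 ∣ (Finset.univ.filter (fun i => x i ≠ 0)).card := by
  have h1 : ∑ i ∈ Finset.univ.filter (fun i => x i ≠ 0), x i = ∑ i, x i :=
    Finset.sum_filter_of_ne (fun i _ h => h)
  have h2 : ∑ i ∈ Finset.univ.filter (fun i => x i ≠ 0), x i
      = ((Finset.univ.filter (fun i => x i ≠ 0)).card : ZMod 2) := by
    rw [Finset.sum_congr rfl (fun i hi => z2_ne_zero _ (Finset.mem_filter.mp hi).2)]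
    simp
  have h3 : (((Finset.univ.filter (fun i => x i ≠ 0)).card : ℕ) : ZMod 2) = 0 := by
    rw [← h2, h1, hx]
  exact (ZMod.natCast_eq_zero_iff _ 2).mp h3

lemma card_even_weight (n : ℕ) (hn : 0 < n) :
    (Finset.univ.filter (fun p : BW n => ∑ i, p i = 0)).card = 2 ^ (n - 1) := by
  set A := Finset.univ.filter (fun p : BW n => ∑ i, p i = 0) with hA
  set B := Finset.univ.filter (fun p : BW n => ¬ (∑ i, p i = 0)) with hB
  have i0 : Fin n := ⟨0, hn⟩
  have hflip : ∀ p : BW n, ∑ i, Function.update p i0 (p i0 + 1) i = (∑ i, p i) + 1 := by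
    intro p
    rw [Finset.sum_update_of_mem (Finset.mem_univ i0), Finset.sdiff_singleton_eq_erase,
      ← Finset.add_sum_erase _ p (Finset.mem_univ i0)]
    ring
  have hcard : A.card = B.card := by
    apply Finset.card_bij' (fun p _ => Function.update p i0 (p i0 + 1))
      (fun p _ => Function.update p i0 (p i0 + 1))
    case hi =>
      intro p hp
      simp only [hA, hB, Finset.mem_filter, Finset.mem_univ, true_and] at *
      rw [hflip, hp, zero_add]
      exact one_ne_zero
    case hj =>
      intro p hp
      simp only [hA, hB, Finset.mem_filter, Finset.mem_univ, true_and] at *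
      rw [hflip]
      rcases z2_cases (∑ i, p i) with h | h
      · exact absurd h hp
      · rw [h]; exact z2_add_self 1
    case left_inv =>
      intro p _
      rw [Function.update_idem, Function.update_self, add_assoc, z2_add_self, add_zero,
        Function.update_eq_self]
    case right_inv =>
      intro p _
      rw [Function.update_idem, Function.update_self, add_assoc, z2_add_self, add_zero,
        Function.update_eq_self]
  have htot : A.card + B.card = 2 ^ n := by
    rw [Finset.card_filter_add_card_filter_not]
    rw [Finset.card_univ, Fintype.card_fun]
    simp
  have h2n : 2 ^ n = 2 * 2 ^ (n - 1) := by
    rw [← pow_succ']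
    congr 1
    omega
  omega

/-- for `n = 2^m` (`m ≥ 2`) and a linear bijection `f : F^m → F^m` such that
`f + Id` is also a bijection, the set `C_{H,f}` is a perfect distance-3 code in `X^n`:
it has minimum distance 3 and cardinality `2^(n-1)`. -/
theorem stmt9 {m : ℕ} (hm : 2 ≤ m) (n : ℕ) (hn : n = 2 ^ m)
    (α : Fin n → BW m) (hα : Function.Bijective α)
    (f : BW m → BW m) (hlin : IsLinearMap (ZMod 2) f)
    (hf : Function.Bijective f) (hf1 : Function.Bijective (fun x => f x + x)) :
    (∀ c ∈ CHf α f, isX c) ∧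
    (∀ c ∈ CHf α f, ∀ c' ∈ CHf α f, c ≠ c' → 3 ≤ hammingDist c c') ∧
    Set.ncard (CHf α f) = 2 ^ (n - 1) := by
  have hn4 : 4 ≤ n := by
    subst hn
    calc (4:ℕ) = 2 ^ 2 := rfl
      _ ≤ 2 ^ m := Nat.pow_le_pow_right (by norm_num) hm
  have hn0 : 0 < n := by omega
  refine ⟨?_, ?_, ?_⟩
  · -- part 1
    intro c hc
    obtain ⟨β, j, p, hp, hj, rfl⟩ := (mem_CHf_iff α f c).mp hc
    unfold isX
    have : Finset.univ.filter
        (fun i => (if i = j then none else some (p i) : Option (ZMod 2)) = none) = {j} := by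
      ext i
      simp only [Finset.mem_filter, Finset.mem_univ, true_and, Finset.mem_singleton]
      by_cases h : i = j <;> simp [h]
    rw [this, Finset.card_singleton]
  · -- part 2
    intro c hc c' hc' hne
    obtain ⟨β, j, p, ⟨hp1, hp2⟩, hj, rfl⟩ := (mem_CHf_iff α f c).mp hc
    obtain ⟨β', j', p', ⟨hp1', hp2'⟩, hj', rfl⟩ := (mem_CHf_iff α f c').mp hc'
    set c : TW n := fun i => if i = j then none else some (p i) with hcdef
    set c' : TW n := fun i => if i = j' then none else some (p' i) with hcdef'
    unfold hammingDist
    set x : BW n := fun i => p i + p' i with hxdef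
    have hxsum : ∑ i, x i = 0 := by
      simp only [hxdef]
      rw [Finset.sum_add_distrib, hp1, hp1', zero_add]
    have hxsyn : ∑ i, x i • α i = β + β' := by
      simp only [hxdef]
      have : ∀ i, (p i + p' i) • α i = p i • α i + p' i • α i := fun i => add_smul _ _ _
      rw [Finset.sum_congr rfl (fun i _ => this i), Finset.sum_add_distrib, hp2, hp2']
    by_cases hjj : j = j'
    · -- same star position
      subst hjj
      have hββ : β = β' := hf1.1 (hj ▸ hj' : f β + β = f β' + β')
      have hxsyn0 : ∑ i, x i • α i = 0 := by rw [hxsyn, hββ, bw_add_self]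
      have hxne : x ≠ 0 := by
        intro h0
        apply hne
        have hpp : p = p' := by
          funext i
          exact z2_eq_of_add_eq_zero _ _ (congrFun h0 i)
        rw [hcdef, hcdef', hpp]
      set S := Finset.univ.filter (fun i => x i ≠ 0) with hS
      have hSd : 2 ∣ S.card := support_card_even x hxsum
      have hS0 : S.card ≠ 0 := by
        intro h0
        apply hxne
        funext i
        by_contra hxi
        have : i ∈ S := Finset.mem_filter.mpr ⟨Finset.mem_univ i, hxi⟩
        rw [Finset.card_eq_zero.mp h0] at this
        exact absurd this (Finset.notMem_empty i)
      have hS2 : S.card ≠ 2 := by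
        intro h2
        obtain ⟨a, b, hab, hSab⟩ := Finset.card_eq_two.mp h2
        have hsum2 : ∑ i, x i • α i = α a + α b := by
          rw [← Finset.sum_filter_of_ne (s := Finset.univ) (f := fun i => x i • α i)
            (p := fun i => x i ≠ 0) (fun i _ h => by
              intro hxi; apply h; simp only [hxi, zero_smul])]
          rw [← hS, hSab, Finset.sum_pair hab]
          have ha : x a = 1 := by
            apply z2_ne_zero
            have : a ∈ S := by rw [hSab]; simp
            exact (Finset.mem_filter.mp this).2
          have hb : x b = 1 := by
            apply z2_ne_zero
            have : b ∈ S := by rw [hSab]; simp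
            exact (Finset.mem_filter.mp this).2
          rw [ha, hb, one_smul, one_smul]
        rw [hxsyn0] at hsum2
        exact hab (hα.1 (bw_eq_of_add_eq_zero _ _ hsum2.symm))
      have hS4 : 4 ≤ S.card := by omega
      have hD : Finset.univ.filter (fun i => c i ≠ c' i) = S.erase j := by
        ext i
        simp only [Finset.mem_filter, Finset.mem_univ, true_and, Finset.mem_erase]
        by_cases h : i = j
        · simp [hcdef, hcdef', h]
        · simp only [hcdef, hcdef', if_neg h, ne_eq, Option.some.injEq, hS,
            Finset.mem_filter, Finset.mem_univ, true_and, hxdef]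
          constructor
          · intro hpp
            exact ⟨h, fun h0 => hpp (z2_eq_of_add_eq_zero _ _ h0)⟩
          · intro ⟨_, h0⟩ hpp
            exact h0 (by rw [hpp, z2_add_self])
      rw [hD]
      calc 3 ≤ S.card - 1 := by omega
        _ ≤ (S.erase j).card := Finset.pred_card_le_card_erase
    · -- different star positions
      have hkey : ∃ i, i ≠ j ∧ i ≠ j' ∧ p i ≠ p' i := by
        by_contra hcon
        push_neg at hcon
        have hsupp : ∀ i, x i ≠ 0 → i = j ∨ i = j' := by
          intro i hxi
          by_contra hii
          push_neg at hii
          exact hxi (by rw [hxdef]; simp only []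
                        rw [hcon i hii.1 hii.2, z2_add_self])
        set S := Finset.univ.filter (fun i => x i ≠ 0) with hS
        have hsub : S ⊆ {j, j'} := by
          intro i hi
          rcases hsupp i (Finset.mem_filter.mp hi).2 with h | h <;> simp [h]
        have hSd : 2 ∣ S.card := support_card_even x hxsum
        have hle : S.card ≤ 2 := by
          calc S.card ≤ ({j, j'} : Finset (Fin n)).card := Finset.card_le_card hsub
            _ = 2 := Finset.card_pair hjj
        have hββ' : β = β' := by
          rcases (by omega : S.card = 0 ∨ S.card = 2) with h0 | h2
          · -- x = 0
            have hx0 : x = 0 := by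
              funext i
              by_contra hxi
              have : i ∈ S := Finset.mem_filter.mpr ⟨Finset.mem_univ i, hxi⟩
              rw [Finset.card_eq_zero.mp h0] at this
              exact absurd this (Finset.notMem_empty i)
            have hpp : p = p' := funext fun i => z2_eq_of_add_eq_zero _ _ (congrFun hx0 i)
            rw [← hp2, ← hp2', hpp]
          · have hSeq : S = {j, j'} := Finset.eq_of_subset_of_card_le hsub
              (by rw [Finset.card_pair hjj]; omega)
            have hsum2 : ∑ i, x i • α i = α j + α j' := by
              rw [← Finset.sum_filter_of_ne (s := Finset.univ) (f := fun i => x i • α i)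
                (p := fun i => x i ≠ 0) (fun i _ h => by
                  intro hxi; apply h; simp only [hxi, zero_smul])]
              rw [← hS, hSeq, Finset.sum_pair hjj]
              have ha : x j = 1 := by
                apply z2_ne_zero
                have : j ∈ S := by rw [hSeq]; simp
                exact (Finset.mem_filter.mp this).2
              have hb : x j' = 1 := by
                apply z2_ne_zero
                have : j' ∈ S := by rw [hSeq]; simp
                exact (Finset.mem_filter.mp this).2
              rw [ha, hb, one_smul, one_smul]
            rw [hxsyn] at hsum2
            -- α j + α j' = β + β', and α j + α j' = f(β+β') + (β+β')
            have hgg : f (β + β') + (β + β') = β + β' := by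
              calc f (β + β') + (β + β') = (f β + f β') + (β + β') := by rw [hlin.map_add]
                _ = (f β + β) + (f β' + β') := by abel
                _ = α j + α j' := by rw [hj, hj']
                _ = β + β' := hsum2.symm
            have hf0 : f (β + β') = 0 := by
              have := add_right_cancel (a := f (β + β')) (b := β + β') (c := 0)
              apply this
              rw [zero_add, hgg]
            have : β + β' = 0 := hf.1 (by rw [hf0, hlin.map_zero])
            exact bw_eq_of_add_eq_zero _ _ this
        exact hjj (hα.1 (by rw [hj, hj', hββ']))
      obtain ⟨i0, hi0j, hi0j', hi0⟩ := hkey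
      have hsub : ({j, j', i0} : Finset (Fin n)) ⊆
          Finset.univ.filter (fun i => c i ≠ c' i) := by
        intro i hi
        simp only [Finset.mem_insert, Finset.mem_singleton] at hi
        apply Finset.mem_filter.mpr
        refine ⟨Finset.mem_univ i, ?_⟩
        rcases hi with h | h | h
        · rw [h]; simp [hcdef, hcdef', hjj]
        · rw [h]; simp [hcdef, hcdef', (Ne.symm hjj : j' ≠ j)]
        · rw [h]; simp [hcdef, hcdef', hi0j, hi0j', hi0]
      have hcard3 : ({j, j', i0} : Finset (Fin n)).card = 3 := by
        rw [Finset.card_insert_of_notMem (by simp [hjj, Ne.symm hi0j]),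
          Finset.card_insert_of_notMem (by simp [Ne.symm hi0j']),
          Finset.card_singleton]
      calc 3 = ({j, j', i0} : Finset (Fin n)).card := hcard3.symm
        _ ≤ _ := Finset.card_le_card hsub
  · -- part 3
    classical
    set e := Equiv.ofBijective α hα with he
    set J : BW n → Fin n := fun p => e.symm (f (∑ i, p i • α i) + (∑ i, p i • α i)) with hJ
    have hαJ : ∀ p : BW n, α (J p) = f (∑ i, p i • α i) + (∑ i, p i • α i) := by
      intro p
      rw [hJ]
      exact e.apply_symm_apply _
    set Φ : BW n → TW n := fun p => fun i => if i = J p then none else some (p i) with hΦ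
    have hset : CHf α f = Φ '' {p : BW n | ∑ i, p i = 0} := by
      ext c
      rw [mem_CHf_iff]
      constructor
      · rintro ⟨β, j, p, ⟨hp1, hp2⟩, hj, rfl⟩
        refine ⟨p, hp1, ?_⟩
        have hJp : J p = j := by
          apply hα.1
          rw [hαJ p, hp2, ← hj]
        rw [hΦ]
        simp only [hJp]
      · rintro ⟨p, hp, rfl⟩
        exact ⟨∑ i, p i • α i, J p, p, ⟨hp, rfl⟩, hαJ p, rfl⟩
    have hinj : Set.InjOn Φ {p : BW n | ∑ i, p i = 0} := by
      intro p hp p' hp' hΦeq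
      have hJeq : J p = J p' := by
        have h1 : Φ p (J p) = none := by simp [hΦ]
        have h2 := congrFun hΦeq (J p)
        rw [h1] at h2
        by_contra hnej
        rw [hΦ] at h2
        simp only [if_neg hnej] at h2
        cases h2
      have hoff : ∀ i, i ≠ J p → p i = p' i := by
        intro i hi
        have h2 := congrFun hΦeq i
        rw [hΦ] at h2
        simp only [if_neg hi, if_neg (hJeq ▸ hi)] at h2
        exact Option.some.inj h2
      funext i
      by_cases h : i = J p
      · subst h
        have key : ∀ r : BW n, (∑ i, r i) = 0 →
            r (J p) = ∑ i ∈ Finset.univ.erase (J p), r i := by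
          intro r hr
          apply z2_eq_of_add_eq_zero
          rw [Finset.add_sum_erase _ r (Finset.mem_univ (J p)), hr]
        have e1 := key p hp
        have e2 := key p' hp'
        rw [hJeq] at e2
        rw [e1, hJeq, e2]
        apply Finset.sum_congr rfl
        intro i hi
        rw [← hJeq] at hi
        exact hoff i (Finset.mem_erase.mp hi).1
      · exact hoff i h
    rw [hset, Set.ncard_image_of_injOn hinj]
    have hsetF : {p : BW n | ∑ i, p i = 0}
        = ↑(Finset.univ.filter (fun p : BW n => ∑ i, p i = 0)) := by
      ext p; simp
    rw [hsetF, Set.ncard_coe_finset, card_even_weight n hn0]
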